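/- Let X be a finite connected pre-ordered set, R a 2-torsion free commutative ring with unity, and L a Lie triple derivation of I(X,R) with coefficients C^{ij}_{xy}. Then C^{ij}_{ij} + C^{ji}_{ji} = 0 whenever i < j < i (i.e., i ≤ j, j ≤ i, i ≠ j). -/

import Mathlib

open IncidenceAlgebra
open scoped Classical

variable {R X : Type*}

/-- The matrix unit `e_{x y}` of the incidence algebra (zero if `¬ x ≤ y`). -/
noncomputable def matrixUnit [CommRing R] [Preorder X] [DecidableEq X] (x y : X) :
    IncidenceAlgebra R X :=
  ⟨fun u v => if u = x ∧ v = y ∧ x ≤ y then 1 else 0, fun a b hab => by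
    try dsimp only
    split_ifs with h
    · exact absurd (by rw [h.1, h.2.1]; exact h.2.2) hab
    · rfl⟩

/-- The Lie bracket `[f,g] = fg - gf`. -/
def lieBr {A : Type*} [Ring A] (f g : A) : A := f * g - g * f

/-- `L` is a Lie triple derivation of the incidence algebra. -/
def IsLieTripleDer [CommRing R] [Preorder X] [DecidableEq X] [LocallyFiniteOrder X]
    (L : IncidenceAlgebra R X →ₗ[R] IncidenceAlgebra R X) : Prop :=
  ∀ f g h : IncidenceAlgebra R X,
    L (lieBr (lieBr f g) h) =
      lieBr (lieBr (L f) g) h + lieBr (lieBr f (L g)) h + lieBr (lieBr f g) (L h)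

/-- `X` is connected: any two points are joined by a chain of comparabilities. -/
def OrdConnected' (X : Type*) [Preorder X] : Prop :=
  ∀ x y : X, Relation.ReflTransGen (fun a b : X => a ≤ b ∨ b ≤ a) x y

/-- `R` is 2-torsion free. -/
def TwoTorsionFree (R : Type*) [CommRing R] : Prop := ∀ r : R, r + r = 0 → r = 0

open Finset

lemma matrixUnit_apply [CommRing R] [Preorder X] [DecidableEq X] (x y u v : X) :
    (matrixUnit x y : IncidenceAlgebra R X) u v
      = if u = x ∧ v = y ∧ x ≤ y then 1 else 0 := rfl

lemma mu_mul [CommRing R] [Preorder X] [DecidableEq X] [LocallyFiniteOrder X]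
    (a b u v : X) (f : IncidenceAlgebra R X) (hab : a ≤ b) :
    ((matrixUnit a b : IncidenceAlgebra R X) * f) u v
      = if u = a then f b v else 0 := by
  rw [mul_apply]
  by_cases hu : u = a
  · subst hu
    simp only [matrixUnit_apply]
    have : ∀ z ∈ Icc u v, (if True ∧ z = b ∧ u ≤ b then (1:R) else 0) * f z v
        = if z = b then f z v else 0 := by
      intro z _
      by_cases hz : z = b <;> simp [hz, hab]
    rw [Finset.sum_congr rfl this, Finset.sum_ite_eq' (Icc u v) b (fun z => f z v)]
    by_cases hb : b ∈ Icc u v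
    · simp [hb]
    · have : ¬ b ≤ v := fun h => hb (Finset.mem_Icc.2 ⟨hab, h⟩)
      simp [hb, apply_eq_zero_of_not_le this f]
  · simp only [matrixUnit_apply]
    rw [if_neg hu]
    apply Finset.sum_eq_zero
    intro z _
    rw [if_neg (fun h => hu h.1), zero_mul]

lemma mul_mu [CommRing R] [Preorder X] [DecidableEq X] [LocallyFiniteOrder X]
    (c d u v : X) (f : IncidenceAlgebra R X) (hcd : c ≤ d) :
    (f * (matrixUnit c d : IncidenceAlgebra R X)) u v
      = if v = d then f u c else 0 := by
  rw [mul_apply]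
  by_cases hv : v = d
  · subst hv
    simp only [matrixUnit_apply]
    have : ∀ z ∈ Icc u v, f u z * (if z = c ∧ True ∧ c ≤ v then (1:R) else 0)
        = if z = c then f u z else 0 := by
      intro z _
      by_cases hz : z = c <;> simp [hz, hcd]
    rw [Finset.sum_congr rfl this, Finset.sum_ite_eq' (Icc u v) c (fun z => f u z)]
    by_cases hc : c ∈ Icc u v
    · simp [hc]
    · have : ¬ u ≤ c := fun h => hc (Finset.mem_Icc.2 ⟨h, hcd⟩)
      simp [hc, apply_eq_zero_of_not_le this f]
  · simp only [matrixUnit_apply]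
    rw [if_neg hv]
    apply Finset.sum_eq_zero
    intro z _
    rw [if_neg (fun h => hv h.2.1), mul_zero]

lemma mu_mul_mu [CommRing R] [Preorder X] [DecidableEq X] [LocallyFiniteOrder X]
    (a b c d : X) (hab : a ≤ b) (hcd : c ≤ d) :
    (matrixUnit a b : IncidenceAlgebra R X) * matrixUnit c d
      = if b = c then (matrixUnit a d : IncidenceAlgebra R X) else 0 := by
  apply DFunLike.ext
  intro u
  funext v
  rw [mu_mul _ _ _ _ _ hab]
  by_cases hbc : b = c
  · subst hbc
    rw [if_pos rfl, matrixUnit_apply, matrixUnit_apply]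
    by_cases hu : u = a
    · subst hu
      by_cases hv : v = d
      · subst hv
        simp [hcd, hab.trans hcd]
      · simp [hv]
    · simp [hu]
  · rw [if_neg hbc, matrixUnit_apply]
    have : ¬ (b = c ∧ v = d ∧ c ≤ d) := fun h => hbc h.1
    simp [this]

/-- relation (R3). `C^{ij}_{ij} + C^{ji}_{ji} = 0` for `i < j < i`. -/
theorem lieTripleDer_rel_R3 [CommRing R] [Preorder X] [DecidableEq X]
    [Fintype X] [LocallyFiniteOrder X]
    (htf : TwoTorsionFree R) (hconn : OrdConnected' X)
    (L : IncidenceAlgebra R X →ₗ[R] IncidenceAlgebra R X) (hL : IsLieTripleDer L) :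
    ∀ i j : X, i ≤ j → j ≤ i → i ≠ j →
      L (matrixUnit i j) i j + L (matrixUnit j i) j i = 0 := by
  intro i j hij hji hne
  have hne' : j ≠ i := Ne.symm hne
  have h1 : lieBr (matrixUnit i j) (matrixUnit j i : IncidenceAlgebra R X)
      = matrixUnit i i - matrixUnit j j := by
    unfold lieBr
    rw [mu_mul_mu _ _ _ _ hij hji, mu_mul_mu _ _ _ _ hji hij]
    simp
  have h2 : lieBr (lieBr (matrixUnit i j) (matrixUnit j i)) (matrixUnit i j)
      = (matrixUnit i j : IncidenceAlgebra R X) + matrixUnit i j := by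
    rw [h1]
    unfold lieBr
    rw [sub_mul, mul_sub, mu_mul_mu _ _ _ _ le_rfl hij, mu_mul_mu _ _ _ _ le_rfl hij,
      mu_mul_mu _ _ _ _ hij le_rfl, mu_mul_mu _ _ _ _ hij le_rfl]
    simp [hne, hne']
  have key := hL (matrixUnit i j) (matrixUnit j i) (matrixUnit i j)
  rw [h2, h1, map_add] at key
  have key' := congrArg (fun f : IncidenceAlgebra R X => f i j) key
  simp only [lieBr, sub_mul, mul_sub, if_true, IncidenceAlgebra.coe_add, IncidenceAlgebra.coe_sub, Pi.add_apply, Pi.sub_apply,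
    mu_mul _ _ _ _ _ hij, mu_mul _ _ _ _ _ hji, mul_mu _ _ _ _ _ hij, mul_mu _ _ _ _ _ hji,
    mu_mul _ _ _ _ _ (le_refl i), mu_mul _ _ _ _ _ (le_refl j),
    mul_mu _ _ _ _ _ (le_refl i), mul_mu _ _ _ _ _ (le_refl j),
    if_pos rfl, if_neg hne, if_neg hne'] at key'
  set A := L (matrixUnit i j) i j with hA
  set B := L (matrixUnit j i) j i with hB
  apply htf
  linear_combination -key'
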